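/- (Serfling's inequality for sampling without replacement) Let k₁,...,k_N ∈ {0,1} with mean K = (1/N)Σ k_i. Draw a uniformly random sample of size n without replacement, with sample mean X. Then for k = N − n and any 0 ≤ β ≤ 1, Pr[X ≥ K + β] ≤ exp(−2β²nN/(k+1)). -/

import Mathlib

open Finset Real in
lemma hoeffding_pt (q t : ℝ) (hq0 : 0 ≤ q) (hq1 : q ≤ 1) :
    1 - q + q * Real.exp t ≤ Real.exp (t * q + t ^ 2 / 8) := by
  set D : ℝ → ℝ := fun s => 1 - q + q * Real.exp s with hD
  have hDpos : ∀ s, 0 < D s := by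
    intro s
    rcases eq_or_lt_of_le hq1 with h | h
    · subst h; simp [hD, Real.exp_pos]
    · have : 0 < 1 - q := by linarith
      have : 0 ≤ q * Real.exp s := mul_nonneg hq0 (Real.exp_pos s).le
      simp only [hD]; linarith
  have hDderiv : ∀ s, HasDerivAt D (q * Real.exp s) s := by
    intro s
    exact ((Real.hasDerivAt_exp s).const_mul q).const_add (1 - q)
  -- g : the function we show is ≥ 0
  set g : ℝ → ℝ := fun s => s * q + s ^ 2 / 8 - Real.log (D s) with hg
  set g' : ℝ → ℝ := fun s => q + s / 4 - q * Real.exp s / D s with hg'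
  have hgderiv : ∀ s, HasDerivAt g (g' s) s := by
    intro s
    have h1 : HasDerivAt (fun s : ℝ => s * q + s ^ 2 / 8) (q + s / 4) s := by
      have := ((hasDerivAt_id s).mul_const q).add
        (((hasDerivAt_pow 2 s)).div_const 8)
      refine this.congr_deriv ?_
      ring
    have h2 : HasDerivAt (fun s => Real.log (D s)) (q * Real.exp s / D s) s :=
      (hDderiv s).log (hDpos s).ne'
    exact h1.sub h2
  have hg'deriv : ∀ s, HasDerivAt g'
      (1 / 4 - (q * Real.exp s * D s - q * Real.exp s * (q * Real.exp s)) / (D s) ^ 2) s := by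
    intro s
    have h1 : HasDerivAt (fun s : ℝ => q + s / 4) (1 / 4) s := by
      simpa using ((hasDerivAt_id s).div_const 4).const_add q
    have h2 : HasDerivAt (fun s => q * Real.exp s / D s)
        ((q * Real.exp s * D s - q * Real.exp s * (q * Real.exp s)) / (D s) ^ 2) s :=
      ((Real.hasDerivAt_exp s).const_mul q).div (hDderiv s) (hDpos s).ne'
    exact h1.sub h2
  have hg''nonneg : ∀ s, 0 ≤ 1 / 4 - (q * Real.exp s * D s - q * Real.exp s * (q * Real.exp s)) / (D s) ^ 2 := by
    intro s
    have hD2 : (0:ℝ) < (D s) ^ 2 := pow_pos (hDpos s) 2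
    rw [sub_nonneg, div_le_iff₀ hD2]
    have hqe : 0 ≤ q * Real.exp s := mul_nonneg hq0 (Real.exp_pos s).le
    have h1q : 0 ≤ 1 - q := by linarith
    have hDs : D s = (1 - q) + q * Real.exp s := rfl
    nlinarith [sq_nonneg ((1 - q) - q * Real.exp s)]
  -- g' is monotone
  have hg'mono : Monotone g' := by
    apply monotone_of_deriv_nonneg
    · exact fun s => (hg'deriv s).differentiableAt
    · intro s
      rw [(hg'deriv s).deriv]
      exact hg''nonneg s
  have hg'0 : g' 0 = 0 := by
    simp [hg', hD]
  have hgdiff : Differentiable ℝ g := fun s => (hgderiv s).differentiableAt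
  have hg0 : g 0 = 0 := by simp [hg, hD]
  -- g t ≥ 0
  have hgt : 0 ≤ g t := by
    rcases le_total 0 t with h | h
    · have : MonotoneOn g (Set.Ici (0:ℝ)) := by
        apply monotoneOn_of_deriv_nonneg (convex_Ici 0) hgdiff.continuous.continuousOn
          (fun s _ => (hgdiff s).differentiableWithinAt)
        intro s hs
        rw [(hgderiv s).deriv, ← hg'0]
        exact hg'mono (le_of_lt (by simpa using hs))
      have := this (Set.self_mem_Ici) (Set.mem_Ici.2 h) h
      linarith [hg0 ▸ this]
    · have : AntitoneOn g (Set.Iic (0:ℝ)) := by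
        apply antitoneOn_of_deriv_nonpos (convex_Iic 0) hgdiff.continuous.continuousOn
          (fun s _ => (hgdiff s).differentiableWithinAt)
        intro s hs
        rw [(hgderiv s).deriv, ← hg'0]
        exact hg'mono (le_of_lt (by simpa using hs))
      have := this (Set.mem_Iic.2 h) (Set.self_mem_Iic) h
      linarith [hg0 ▸ this]
  -- conclude
  have : Real.log (D t) ≤ t * q + t ^ 2 / 8 := by
    simp only [hg] at hgt; linarith
  calc 1 - q + q * Real.exp t = D t := rfl
    _ = Real.exp (Real.log (D t)) := (Real.exp_log (hDpos t)).symm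
    _ ≤ Real.exp (t * q + t ^ 2 / 8) := Real.exp_le_exp.2 this

lemma sum_powersetCard_succ {α : Type*} [DecidableEq α] (u : Finset α) (n : ℕ)
    (g : Finset α → ℝ) :
    ((n : ℝ) + 1) * ∑ S ∈ u.powersetCard (n + 1), g S =
      ∑ T ∈ u.powersetCard n, ∑ i ∈ u \ T, g (insert i T) := by
  have lhs : ((n : ℝ) + 1) * ∑ S ∈ u.powersetCard (n + 1), g S =
      ∑ S ∈ u.powersetCard (n + 1), ∑ i ∈ S, g S := by
    rw [Finset.mul_sum]
    refine Finset.sum_congr rfl fun S hS => ?_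
    rw [Finset.sum_const, (Finset.mem_powersetCard.1 hS).2]
    push_cast
    ring
  rw [lhs, Finset.sum_sigma', Finset.sum_sigma']
  refine Finset.sum_bij' (fun p _ => (⟨p.1.erase p.2, p.2⟩ : Σ _ : Finset α, α))
    (fun p _ => (⟨insert p.2 p.1, p.2⟩ : Σ _ : Finset α, α)) ?_ ?_ ?_ ?_ ?_
  · rintro ⟨S, i⟩ h
    rw [Finset.mem_sigma] at h ⊢
    obtain ⟨hS, hi⟩ := h
    rw [Finset.mem_powersetCard] at hS
    constructor
    · rw [Finset.mem_powersetCard]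
      exact ⟨(Finset.erase_subset _ _).trans hS.1,
        by rw [Finset.card_erase_of_mem hi, hS.2]; rfl⟩
    · rw [Finset.mem_sdiff]
      exact ⟨hS.1 hi, Finset.notMem_erase _ _⟩
  · rintro ⟨T, i⟩ h
    rw [Finset.mem_sigma] at h ⊢
    obtain ⟨hT, hi⟩ := h
    rw [Finset.mem_powersetCard] at hT
    rw [Finset.mem_sdiff] at hi
    constructor
    · rw [Finset.mem_powersetCard]
      exact ⟨Finset.insert_subset hi.1 hT.1,
        by rw [Finset.card_insert_of_notMem hi.2, hT.2]⟩
    · exact Finset.mem_insert_self _ _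
  · rintro ⟨S, i⟩ h
    rw [Finset.mem_sigma] at h
    simp [Finset.insert_erase h.2]
  · rintro ⟨T, i⟩ h
    rw [Finset.mem_sigma, Finset.mem_sdiff] at h
    simp [Finset.erase_insert h.2.2]
  · rintro ⟨S, i⟩ h
    rw [Finset.mem_sigma] at h
    simp [Finset.insert_erase h.2]

lemma invsq_sum : ∀ (N k : ℕ), 1 ≤ k → k ≤ N →
    ∑ j ∈ Finset.Ico k N, (1 : ℝ) / (j : ℝ) ^ 2 ≤
      ((N : ℝ) - k) * ((k : ℝ) + 1) / ((N : ℝ) * (k : ℝ) ^ 2) := by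
  intro N
  induction N with
  | zero => intro k hk hkN; omega
  | succ N ih =>
    intro k hk hkN
    rcases eq_or_lt_of_le hkN with h | h
    · subst h; simp
    · have hkN' : k ≤ N := by omega
      have hN1 : 1 ≤ N := le_trans hk hkN'
      rw [Finset.sum_Ico_succ_top hkN']
      have hNpos : (0:ℝ) < N := by exact_mod_cast hN1
      have hN1pos : (0:ℝ) < (N:ℝ) + 1 := by linarith
      have hkpos : (0:ℝ) < k := by exact_mod_cast hk
      have hkN'' : (k:ℝ) ≤ N := by exact_mod_cast hkN'
      have := ih k hk hkN'
      push_cast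
      have key : ((N : ℝ) - k) * ((k : ℝ) + 1) / ((N : ℝ) * (k : ℝ) ^ 2) + 1 / (N:ℝ) ^ 2 ≤
          ((N : ℝ) + 1 - k) * ((k : ℝ) + 1) / (((N : ℝ) + 1) * (k : ℝ) ^ 2) := by
        rw [div_add_div _ _ (by positivity) (by positivity),
          div_le_div_iff₀ (by positivity) (by positivity)]
        nlinarith [mul_nonneg (mul_nonneg (sub_nonneg.2 hkN'') hkpos.le)
          (mul_pos hNpos (mul_pos hNpos hkpos)).le]
      linarith

open Finset Real in
lemma key_mgf (N : ℕ) (f : Fin N → ℝ) (hf : ∀ i, f i = 0 ∨ f i = 1)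
    (μ : ℝ) (hμ : (N : ℝ) * μ = ∑ i, f i) :
    ∀ n : ℕ, n < N → ∀ l : ℝ,
    ∑ S ∈ (Finset.univ : Finset (Fin N)).powersetCard n,
        Real.exp (l * ((∑ i ∈ S, f i) - n * μ) / ((N : ℝ) - n)) ≤
      (N.choose n : ℝ) *
        Real.exp (l ^ 2 / 8 * ∑ j ∈ Finset.Ico (N - n) N, (1 : ℝ) / (j : ℝ) ^ 2) := by
  intro n
  induction n with
  | zero => intro _ l; simp
  | succ n ih =>
    intro hn1 l
    have hnN : n < N := by omega
    have hNn : (n : ℝ) + 1 < N := by exact_mod_cast hn1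
    have hnle : n ≤ N := by omega
    push_cast
    set C : ℝ := (N : ℝ) - ((n : ℝ) + 1) with hC
    set K : ℝ := (N : ℝ) - (n : ℝ) with hK
    have hCpos : 0 < C := by simp only [hC]; linarith
    have hKpos : 0 < K := by simp only [hK]; linarith
    set t : ℝ := l / C with ht
    set M : ℝ := ∑ i, f i with hM
    -- per-T bound
    have hT : ∀ T ∈ (Finset.univ : Finset (Fin N)).powersetCard n,
        ∑ i ∈ Finset.univ \ T, Real.exp (l * ((∑ j ∈ insert i T, f j) - ((n : ℝ) + 1) * μ) / C)
          ≤ K * Real.exp (t ^ 2 / 8) * Real.exp (l * ((∑ i ∈ T, f i) - n * μ) / K) := by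
      intro T hTm
      obtain ⟨hTsub, hTcard⟩ := Finset.mem_powersetCard.1 hTm
      set s : ℝ := ∑ i ∈ T, f i with hs
      have hcard : (((Finset.univ : Finset (Fin N)) \ T).card : ℝ) = K := by
        rw [Finset.card_sdiff_of_subset hTsub, Finset.card_univ, Fintype.card_fin, hTcard,
          Nat.cast_sub hnle]
      have hmsum : ∑ i ∈ Finset.univ \ T, f i = M - s :=
        Finset.sum_sdiff_eq_sub hTsub
      set m : ℝ := M - s with hm
      have hm0 : 0 ≤ m := by
        rw [← hmsum]
        exact Finset.sum_nonneg fun i _ => by rcases hf i with h | h <;> simp [h]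
      have hm1 : m ≤ K := by
        rw [← hmsum, ← hcard]
        calc ∑ i ∈ Finset.univ \ T, f i ≤ ∑ _i ∈ Finset.univ \ T, (1 : ℝ) :=
              Finset.sum_le_sum fun i _ => by rcases hf i with h | h <;> simp [h]
          _ = (((Finset.univ : Finset (Fin N)) \ T).card : ℝ) := by simp
      set q : ℝ := m / K with hq
      set A : ℝ := l * (s - ((n : ℝ) + 1) * μ) / C with hA
      calc ∑ i ∈ Finset.univ \ T,
            Real.exp (l * ((∑ j ∈ insert i T, f j) - ((n : ℝ) + 1) * μ) / C)
          = ∑ i ∈ Finset.univ \ T, Real.exp A * (1 + (Real.exp t - 1) * f i) := by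
            refine Finset.sum_congr rfl fun i hi => ?_
            rw [Finset.sum_insert (Finset.mem_sdiff.1 hi).2]
            rcases hf i with h | h
            · rw [h]; simp [hA, hs]
            · rw [h]
              have h2 : (1 : ℝ) + (Real.exp t - 1) * 1 = Real.exp t := by ring
              rw [h2, ← Real.exp_add]
              congr 1
              rw [hA, ht]; field_simp; ring
        _ = Real.exp A * (K + (Real.exp t - 1) * m) := by
            rw [← Finset.mul_sum, Finset.sum_add_distrib, Finset.sum_const, ← Finset.mul_sum,
              hmsum, nsmul_eq_mul, mul_one, hcard]
        _ = (K * Real.exp A) * (1 - q + q * Real.exp t) := by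
            rw [hq]; field_simp; ring
        _ ≤ (K * Real.exp A) * Real.exp (t * q + t ^ 2 / 8) := by
            refine mul_le_mul_of_nonneg_left
              (hoeffding_pt q t (div_nonneg hm0 hKpos.le) ((div_le_one hKpos).2 hm1)) ?_
            positivity
        _ = K * Real.exp (t ^ 2 / 8) * Real.exp (l * (s - n * μ) / K) := by
            rw [mul_assoc, mul_assoc, ← Real.exp_add, ← Real.exp_add]
            congr 2
            have hq' : A + (t * q + t ^ 2 / 8) = t ^ 2 / 8 + l * (s - n * μ) / K := by
              have hMs : M = (N : ℝ) * μ := hμ.symm ▸ hM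
              rw [hA, ht, hq, hm, hMs, hK, hC]
              have hC0 : (N : ℝ) - ((n : ℝ) + 1) ≠ 0 := (by linarith : (0 : ℝ) < (N : ℝ) - ((n : ℝ) + 1)).ne'
              have hK0 : (N : ℝ) - (n : ℝ) ≠ 0 := (by linarith : (0 : ℝ) < (N : ℝ) - (n : ℝ)).ne'
              field_simp
              ring
            linarith [hq']
    -- assemble
    have hdc := sum_powersetCard_succ (Finset.univ : Finset (Fin N)) n
      (fun S => Real.exp (l * ((∑ i ∈ S, f i) - ((n : ℝ) + 1) * μ) / C))
    have hmain : ((n : ℝ) + 1) *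
        ∑ S ∈ (Finset.univ : Finset (Fin N)).powersetCard (n + 1),
          Real.exp (l * ((∑ i ∈ S, f i) - ((n : ℝ) + 1) * μ) / C)
        ≤ ((n : ℝ) + 1) * ((N.choose (n + 1) : ℝ) *
          Real.exp (l ^ 2 / 8 * ∑ j ∈ Finset.Ico (N - (n + 1)) N, (1 : ℝ) / (j : ℝ) ^ 2)) := by
      rw [hdc]
      have step1 : ∑ T ∈ (Finset.univ : Finset (Fin N)).powersetCard n,
          ∑ i ∈ Finset.univ \ T,
            Real.exp (l * ((∑ j ∈ insert i T, f j) - ((n : ℝ) + 1) * μ) / C)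
          ≤ ∑ T ∈ (Finset.univ : Finset (Fin N)).powersetCard n,
            K * Real.exp (t ^ 2 / 8) * Real.exp (l * ((∑ i ∈ T, f i) - n * μ) / K) :=
        Finset.sum_le_sum hT
      have step2 : ∑ T ∈ (Finset.univ : Finset (Fin N)).powersetCard n,
            K * Real.exp (t ^ 2 / 8) * Real.exp (l * ((∑ i ∈ T, f i) - n * μ) / K)
          ≤ K * Real.exp (t ^ 2 / 8) * ((N.choose n : ℝ) *
            Real.exp (l ^ 2 / 8 * ∑ j ∈ Finset.Ico (N - n) N, (1 : ℝ) / (j : ℝ) ^ 2)) := by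
        rw [← Finset.mul_sum]
        exact mul_le_mul_of_nonneg_left (ih hnN l) (by positivity)
      refine le_trans (le_trans step1 step2) (le_of_eq ?_)
      -- identity combining everything
      have hcastC : ((N - (n + 1) : ℕ) : ℝ) = C := by
        rw [Nat.cast_sub hn1.le]; push_cast; ring
      have hsplit : ∑ j ∈ Finset.Ico (N - (n + 1)) N, (1 : ℝ) / (j : ℝ) ^ 2
          = 1 / C ^ 2 + ∑ j ∈ Finset.Ico (N - n) N, (1 : ℝ) / (j : ℝ) ^ 2 := by
        rw [Finset.sum_eq_sum_Ico_succ_bot (by omega : N - (n + 1) < N),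
          show N - (n + 1) + 1 = N - n by omega, hcastC]
      have hch : K * (N.choose n : ℝ) = ((n : ℝ) + 1) * (N.choose (n + 1) : ℝ) := by
        have h := congrArg (Nat.cast : ℕ → ℝ) (Nat.choose_succ_right_eq N n)
        push_cast [Nat.cast_sub hnle] at h
        rw [hK]; linarith [h]
      have hexp : Real.exp (l ^ 2 / 8 *
            (1 / C ^ 2 + ∑ j ∈ Finset.Ico (N - n) N, (1 : ℝ) / (j : ℝ) ^ 2))
          = Real.exp (t ^ 2 / 8) *
            Real.exp (l ^ 2 / 8 * ∑ j ∈ Finset.Ico (N - n) N, (1 : ℝ) / (j : ℝ) ^ 2) := by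
        rw [← Real.exp_add, ht]
        congr 1
        field_simp
      rw [hsplit, hexp]
      linear_combination (Real.exp (t ^ 2 / 8) *
        Real.exp (l ^ 2 / 8 * ∑ j ∈ Finset.Ico (N - n) N, (1 : ℝ) / (j : ℝ) ^ 2)) * hch
    have hpos : (0 : ℝ) < (n : ℝ) + 1 := by positivity
    exact le_of_mul_le_mul_left hmain hpos


/- STATEMENT 3 (Serfling's inequality for sampling without replacement):
for values `f i ∈ {0,1}` with mean `K`, a uniformly random sample of size `n`
(without replacement) with sample mean `X` satisfies
`Pr[X ≥ K + β] ≤ exp(−2β²nN/(k+1))` with `k = N − n`, for `0 ≤ β ≤ 1`. -/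
open scoped Classical in
theorem stmt_3 (N n : ℕ) (hn : 0 < n) (hnN : n ≤ N) (f : Fin N → ℝ)
    (hf : ∀ i, f i = 0 ∨ f i = 1) (β : ℝ) (hβ0 : 0 ≤ β) (hβ1 : β ≤ 1) :
    ((((Finset.univ : Finset (Fin N)).powersetCard n).filter fun S =>
        (∑ i ∈ S, f i) / (n : ℝ) ≥ (∑ i, f i) / (N : ℝ) + β).card : ℝ) /
      (((Finset.univ : Finset (Fin N)).powersetCard n).card : ℝ)
      ≤ Real.exp (-(2 * β ^ 2 * n * N) / (((N - n : ℕ) : ℝ) + 1)) := by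
  have hN : 0 < N := lt_of_lt_of_le hn hnN
  rcases eq_or_lt_of_le hnN with hEq | hlt
  · -- n = N
    subst hEq
    have h1 : (Finset.univ : Finset (Fin n)).powersetCard n = {Finset.univ} := by
      have := Finset.powersetCard_self (Finset.univ : Finset (Fin n))
      rwa [Finset.card_univ, Fintype.card_fin] at this
    rw [h1, Finset.filter_singleton]
    split_ifs with hcond
    · have hβ : β = 0 := le_antisymm (by linarith [hcond]) hβ0
      subst hβ
      norm_num
    · simp only [Finset.card_empty, Nat.cast_zero, zero_div]
      exact (Real.exp_pos _).le
  · -- n < N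
    have hn' : (0 : ℝ) < n := by exact_mod_cast hn
    have hN' : (0 : ℝ) < N := by exact_mod_cast hN
    have hnN' : (n : ℝ) < N := by exact_mod_cast hlt
    set μ : ℝ := (∑ i, f i) / (N : ℝ) with hμdef
    have hμ : (N : ℝ) * μ = ∑ i, f i := by
      rw [hμdef]; field_simp
    set k : ℝ := (N : ℝ) - n with hk
    have hkpos : (0 : ℝ) < k := by simp only [hk]; linarith
    have hcastk : ((N - n : ℕ) : ℝ) = k := by
      rw [Nat.cast_sub hnN]
    set r : ℝ := (n : ℝ) * β / k with hr
    have hr0 : 0 ≤ r := by positivity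
    set B : ℝ := (n : ℝ) * (k + 1) / ((N : ℝ) * k ^ 2) with hB
    have hBpos : 0 < B := by positivity
    set l : ℝ := 4 * r / B with hl
    have hl0 : 0 ≤ l := by positivity
    -- sum bound
    have hsum : ∑ j ∈ Finset.Ico (N - n) N, (1 : ℝ) / (j : ℝ) ^ 2 ≤ B := by
      have h := invsq_sum N (N - n) (by omega) (by omega)
      rw [hcastk] at h
      have hNk : (N : ℝ) - k = n := by rw [hk]; ring
      rw [hNk] at h
      exact h
    have hmgf := key_mgf N f hf μ hμ n hlt l
    rw [show ((N : ℝ) - n) = k from rfl] at hmgf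
    -- Markov
    set P := (Finset.univ : Finset (Fin N)).powersetCard n with hP
    set F := P.filter fun S => (∑ i ∈ S, f i) / (n : ℝ) ≥ (∑ i, f i) / (N : ℝ) + β with hF
    have hmarkov : (F.card : ℝ) * Real.exp (l * r) ≤
        ∑ S ∈ P, Real.exp (l * ((∑ i ∈ S, f i) - n * μ) / k) := by
      calc (F.card : ℝ) * Real.exp (l * r) = ∑ _S ∈ F, Real.exp (l * r) := by
            rw [Finset.sum_const, nsmul_eq_mul]
        _ ≤ ∑ S ∈ F, Real.exp (l * ((∑ i ∈ S, f i) - n * μ) / k) := by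
            refine Finset.sum_le_sum fun S hS => Real.exp_le_exp.2 ?_
            have hS2 := (Finset.mem_filter.1 hS).2
            have h3 : (n : ℝ) * β ≤ (∑ i ∈ S, f i) - n * μ := by
              rw [hμdef]
              have h4 : ((∑ i, f i) / (N : ℝ) + β) * n ≤ ∑ i ∈ S, f i :=
                (le_div_iff₀ hn').1 hS2
              nlinarith
            have h5 : r ≤ ((∑ i ∈ S, f i) - n * μ) / k := by
              rw [hr]
              exact (div_le_div_iff_of_pos_right hkpos).2 h3
            have h6 := mul_le_mul_of_nonneg_left h5 hl0
            rw [mul_div_assoc]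
            exact h6
        _ ≤ ∑ S ∈ P, Real.exp (l * ((∑ i ∈ S, f i) - n * μ) / k) :=
            Finset.sum_le_sum_of_subset_of_nonneg (Finset.filter_subset _ _)
              (fun _ _ _ => (Real.exp_pos _).le)
    have hchain : (F.card : ℝ) * Real.exp (l * r) ≤
        (N.choose n : ℝ) * Real.exp (l ^ 2 / 8 * B) := by
      refine le_trans hmarkov (le_trans hmgf ?_)
      have : Real.exp (l ^ 2 / 8 * ∑ j ∈ Finset.Ico (N - n) N, (1 : ℝ) / (j : ℝ) ^ 2) ≤
          Real.exp (l ^ 2 / 8 * B) :=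
        Real.exp_le_exp.2 (mul_le_mul_of_nonneg_left hsum (by positivity))
      exact mul_le_mul_of_nonneg_left this (by positivity)
    have hcard : (F.card : ℝ) ≤ (N.choose n : ℝ) * Real.exp (l ^ 2 / 8 * B - l * r) := by
      have h2 : Real.exp (l ^ 2 / 8 * B - l * r) * Real.exp (l * r) =
          Real.exp (l ^ 2 / 8 * B) := by
        rw [← Real.exp_add]; ring_nf
      have := hchain
      rw [← h2, ← mul_assoc] at this
      exact le_of_mul_le_mul_right this (Real.exp_pos _)
    have hPcard : (P.card : ℝ) = (N.choose n : ℝ) := by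
      rw [hP, Finset.card_powersetCard, Finset.card_univ, Fintype.card_fin]
    have hchpos : (0 : ℝ) < (N.choose n : ℝ) := by
      exact_mod_cast Nat.choose_pos hnN
    rw [hPcard, div_le_iff₀ hchpos]
    have hexp : l ^ 2 / 8 * B - l * r = -(2 * β ^ 2 * n * N) / (((N - n : ℕ) : ℝ) + 1) := by
      rw [hcastk, hl, hr, hB]
      field_simp
      ring
    rw [← hexp, mul_comm]
    exact hcard
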